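/- Let k > 3 and 1 ≤ n < 2k − 1. Then the poset Σ_{n,k} is order-isomorphic to the poset {A ⊆ [n] : |A| ≥ k} ∪ {∅} of subsets of [n] of cardinality at least k together with the empty set, ordered by inclusion. -/

import Mathlib

open Finset

def graphOf (n : ℕ) (E : Finset (Finset (Fin n))) : SimpleGraph (Fin n) where
  Adj u v := u ≠ v ∧ ({u, v} : Finset (Fin n)) ∈ E
  symm := by
    constructor
    rintro u v ⟨h1, h2⟩
    exact ⟨h1.symm, by rwa [Finset.pair_comm]⟩
  loopless := ⟨fun u h => h.1 rfl⟩

def IsGraphEdges (n : ℕ) (E : Finset (Finset (Fin n))) : Prop := ∀ e ∈ E, e.card = 2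

def IsTwoConn {V : Type} [Fintype V] (G : SimpleGraph V) : Prop :=
  2 ≤ Fintype.card V ∧ G.Connected ∧
    ∀ v : V, (G.induce ({v}ᶜ : Set V)).Connected

def BlockCand {V : Type} (G : SimpleGraph V) (W : Finset V) : Prop :=
  W.card = 1 ∨ IsTwoConn (G.induce (W : Set V))

def IsBlock {V : Type} (G : SimpleGraph V) (W : Finset V) : Prop :=
  BlockCand G W ∧ ∀ W' : Finset V, W ⊂ W' → ¬ BlockCand G W'

def InSigma (n k : ℕ) (E : Finset (Finset (Fin n))) : Prop :=
  IsGraphEdges n E ∧ ∀ W : Finset (Fin n), IsBlock (graphOf n E) W →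
    W.card = 1 ∨ (k ≤ W.card ∧ (graphOf n E).IsClique (W : Set (Fin n)))

/- ### Auxiliary lemmas -/

lemma graphOf_adj {m : ℕ} (E : Finset (Finset (Fin m))) (u v : Fin m) :
    (graphOf m E).Adj u v ↔ u ≠ v ∧ ({u, v} : Finset (Fin m)) ∈ E := Iff.rfl

/-- A graph in which every vertex is equal or adjacent to a hub `c` is connected. -/
lemma hub_connected {V : Type*} (H : SimpleGraph V) (c : V)
    (h : ∀ v, v = c ∨ H.Adj v c) : H.Connected := by
  have r : ∀ u, H.Reachable u c := by
    intro u
    rcases h u with h' | h'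
    · rw [h']
    · exact h'.reachable
  haveI : Nonempty V := ⟨c⟩
  exact ⟨fun u v => (r u).trans (r v).symm⟩

lemma reach_eq_of_isolated {V : Type*} {G : SimpleGraph V} {v w : V}
    (hiso : ∀ u, ¬ G.Adj v u) (h : G.Reachable v w) : v = w := by
  obtain ⟨p⟩ := h
  cases p with
  | nil => rfl
  | cons h _ => exact absurd h (hiso _)

lemma not_connected_isolated {m : ℕ} (G : SimpleGraph (Fin m)) (W : Finset (Fin m))
    {v w : Fin m} (hv : v ∈ W) (hw : w ∈ W) (hvw : v ≠ w)
    (hiso : ∀ u, ¬ G.Adj v u) : ¬ (G.induce (W : Set (Fin m))).Connected := by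
  intro h
  have hiso' : ∀ u : ↥(W : Set (Fin m)),
      ¬ (G.induce (W : Set (Fin m))).Adj ⟨v, hv⟩ u := by
    intro u hadj
    exact hiso u (by simpa using hadj)
  have := reach_eq_of_isolated hiso' (h.preconnected ⟨v, hv⟩ ⟨w, hw⟩)
  exact hvw (congrArg Subtype.val this)

/-- If there are two hubs `a ≠ b` in `W` such that every vertex of `W` is equal or adjacent
to each hub, then the induced graph on `W` is 2-connected. -/
lemma isTwoConn_of_hubs {m : ℕ} (G : SimpleGraph (Fin m)) (W : Finset (Fin m))
    (a b : Fin m) (ha : a ∈ W) (hb : b ∈ W) (hab : a ≠ b)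
    (hhub : ∀ c, (c = a ∨ c = b) → ∀ v ∈ W, v = c ∨ G.Adj v c) :
    IsTwoConn (G.induce (W : Set (Fin m))) := by
  refine ⟨?_, ?_, ?_⟩
  · refine Fintype.one_lt_card_iff.mpr ⟨⟨a, ha⟩, ⟨b, hb⟩, ?_⟩
    intro h
    exact hab (congrArg Subtype.val h)
  · refine hub_connected _ ⟨a, ha⟩ ?_
    rintro ⟨u, hu⟩
    rcases hhub a (Or.inl rfl) u hu with h | h
    · exact Or.inl (Subtype.ext h)
    · exact Or.inr (by simpa using h)
  · intro v
    obtain ⟨c, hcab, hcv⟩ : ∃ c, (c = a ∨ c = b) ∧ c ≠ (v : Fin m) := by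
      by_cases hva : (v : Fin m) = a
      · exact ⟨b, Or.inr rfl, fun h => hab (hva ▸ h).symm⟩
      · exact ⟨a, Or.inl rfl, fun h => hva h.symm⟩
    have hcW : c ∈ W := by rcases hcab with rfl | rfl <;> assumption
    refine hub_connected _ ⟨⟨c, hcW⟩, ?_⟩ ?_
    · simp only [Set.mem_compl_iff, Set.mem_singleton_iff]
      intro h
      exact hcv (congrArg Subtype.val h)
    · rintro ⟨⟨u, huW⟩, huv⟩
      rcases hhub c hcab u huW with h | h
      · exact Or.inl (Subtype.ext (Subtype.ext h))
      · exact Or.inr (by simpa using h)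

lemma isTwoConn_of_isClique {m : ℕ} (G : SimpleGraph (Fin m)) (W : Finset (Fin m))
    (h2 : 2 ≤ W.card) (hcl : G.IsClique (W : Set (Fin m))) :
    IsTwoConn (G.induce (W : Set (Fin m))) := by
  obtain ⟨a, ha, b, hb, hab⟩ := Finset.one_lt_card.mp h2
  refine isTwoConn_of_hubs G W a b ha hb hab ?_
  intro c hc v hv
  rcases eq_or_ne v c with h | h
  · exact Or.inl h
  · have hcW : c ∈ W := by rcases hc with rfl | rfl <;> assumption
    exact Or.inr (hcl (by exact_mod_cast hv) (by exact_mod_cast hcW) h)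

/-- Every `BlockCand` set extends to a block. -/
lemma exists_block_superset {m : ℕ} (G : SimpleGraph (Fin m)) (W : Finset (Fin m))
    (hW : BlockCand G W) : ∃ W', W ⊆ W' ∧ IsBlock G W' := by
  classical
  let s : Finset (Finset (Fin m)) :=
    Finset.univ.powerset.filter fun X => W ⊆ X ∧ BlockCand G X
  have hWs : W ∈ s := by simp [s, hW]
  obtain ⟨X, hXs, hmax⟩ := s.exists_max_image Finset.card ⟨W, hWs⟩
  simp only [s, Finset.mem_filter] at hXs
  refine ⟨X, hXs.2.1, hXs.2.2, ?_⟩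
  intro W' hsub hcand
  have hW's : W' ∈ s := by
    simp only [s, Finset.mem_filter]
    exact ⟨Finset.mem_powerset.mpr (Finset.subset_univ _), hXs.2.1.trans hsub.subset, hcand⟩
  exact absurd (hmax W' hW's) (not_le.mpr (Finset.card_lt_card hsub))

lemma two_le_card_of_isTwoConn {m : ℕ} {G : SimpleGraph (Fin m)} {W : Finset (Fin m)}
    (h : IsTwoConn (G.induce (W : Set (Fin m)))) : 2 ≤ W.card := by
  obtain ⟨⟨a, ha⟩, ⟨b, hb⟩, hab⟩ := Fintype.one_lt_card_iff.mp h.1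
  exact Finset.one_lt_card.mpr ⟨a, by exact_mod_cast ha, b, by exact_mod_cast hb,
    fun h => hab (Subtype.ext h)⟩

lemma adj_graphOf_powersetCard {m : ℕ} (A : Finset (Fin m)) (u v : Fin m) :
    (graphOf m (A.powersetCard 2)).Adj u v ↔ u ≠ v ∧ u ∈ A ∧ v ∈ A := by
  rw [graphOf_adj]
  constructor
  · rintro ⟨hne, hmem⟩
    rw [Finset.mem_powersetCard] at hmem
    exact ⟨hne, hmem.1 (Finset.mem_insert_self u {v}),
      hmem.1 (Finset.mem_insert_of_mem (Finset.mem_singleton_self v))⟩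
  · rintro ⟨hne, hu, hv⟩
    refine ⟨hne, Finset.mem_powersetCard.mpr ⟨?_, Finset.card_pair hne⟩⟩
    intro x hx
    rcases Finset.mem_insert.mp hx with rfl | hx
    · exact hu
    · rw [Finset.mem_singleton.mp hx]; exact hv

lemma powersetCard_two_empty {m : ℕ} :
    (Finset.powersetCard 2 (∅ : Finset (Fin m))) = ∅ := by
  ext e
  simp only [Finset.mem_powersetCard, Finset.subset_empty, Finset.notMem_empty, iff_false]
  rintro ⟨rfl, h⟩
  simp at h

lemma biUnion_powersetCard_two {m : ℕ} (A : Finset (Fin m)) (h2 : 2 ≤ A.card) :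
    (A.powersetCard 2).biUnion id = A := by
  ext a
  simp only [Finset.mem_biUnion, Finset.mem_powersetCard, id]
  constructor
  · rintro ⟨e, ⟨hsub, _⟩, ha⟩
    exact hsub ha
  · intro ha
    obtain ⟨b, hb, hba⟩ := Finset.exists_mem_ne h2 a
    refine ⟨{a, b}, ⟨?_, Finset.card_pair hba.symm⟩, Finset.mem_insert_self a {b}⟩
    intro x hx
    rcases Finset.mem_insert.mp hx with rfl | hx
    · exact ha
    · rw [Finset.mem_singleton.mp hx]; exact hb

lemma inSigma_empty (n k : ℕ) : InSigma n k ∅ := by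
  refine ⟨fun e he => absurd he (Finset.notMem_empty e), fun W hW => ?_⟩
  left
  by_contra h1
  have h2 := hW.1.resolve_left h1
  have hc := two_le_card_of_isTwoConn h2
  obtain ⟨a, ha, b, hb, hab⟩ := Finset.one_lt_card.mp hc
  refine absurd h2.2.1 (not_connected_isolated _ W ha hb hab ?_)
  intro u hadj
  exact absurd hadj.2 (Finset.notMem_empty _)

lemma inSigma_powersetCard (n k : ℕ) (hk : 2 ≤ k) (A : Finset (Fin n)) (hA : k ≤ A.card) :
    InSigma n k (A.powersetCard 2) := by
  have hA2 : 2 ≤ A.card := hk.trans hA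
  set G := graphOf n (A.powersetCard 2) with hG
  have hAcl : G.IsClique (A : Set (Fin n)) := by
    intro x hx y hy hxy
    exact (adj_graphOf_powersetCard A x y).mpr ⟨hxy, by exact_mod_cast hx, by exact_mod_cast hy⟩
  refine ⟨fun e he => (Finset.mem_powersetCard.mp he).2, fun W hW => ?_⟩
  by_cases h1 : W.card = 1
  · exact Or.inl h1
  right
  have h2conn := hW.1.resolve_left h1
  have hc2 : 2 ≤ W.card := two_le_card_of_isTwoConn h2conn
  have hWA : W ⊆ A := by
    intro v hv
    by_contra hvA
    obtain ⟨w, hw, hwv⟩ := Finset.exists_mem_ne hc2 v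
    refine absurd h2conn.2.1 (not_connected_isolated G W hv hw hwv.symm ?_)
    intro u hadj
    exact hvA ((adj_graphOf_powersetCard A v u).mp hadj).2.1
  have hWeq : W = A := by
    by_contra hne
    have hss : W ⊂ A := Finset.ssubset_iff_subset_ne.mpr ⟨hWA, hne⟩
    exact hW.2 A hss (Or.inr (isTwoConn_of_isClique G A hA2 hAcl))
  rw [hWeq]
  exact ⟨hA, hAcl⟩

lemma sigma_structure (n k : ℕ) (hk : 3 < k) (hn2 : n < 2 * k - 1)
    (E : Finset (Finset (Fin n))) (hE : InSigma n k E) :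
    E = Finset.powersetCard 2 (E.biUnion id) ∧ (E = ∅ ∨ k ≤ (E.biUnion id).card) := by
  rcases eq_or_ne E ∅ with rfl | hEne
  · simp [powersetCard_two_empty]
  set G := graphOf n E with hG
  -- each pair in E is a clique of size two
  have hpair : ∀ e ∈ E, ∃ u v : Fin n, u ≠ v ∧ e = {u, v} := by
    intro e he
    obtain ⟨u, v, huv, rfl⟩ := Finset.card_eq_two.mp (hE.1 e he)
    exact ⟨u, v, huv, rfl⟩
  -- blocks of card ≥ 2 are cliques of size ≥ k
  have hblock : ∀ W, IsBlock G W → 2 ≤ W.card →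
      k ≤ W.card ∧ G.IsClique (W : Set (Fin n)) := by
    intro W hW hc
    rcases hE.2 W hW with h1 | h2
    · omega
    · exact h2
  -- uniqueness of blocks of card ≥ 2
  have huniq : ∀ W1 W2, IsBlock G W1 → IsBlock G W2 → 2 ≤ W1.card → 2 ≤ W2.card →
      W1 = W2 := by
    intro W1 W2 hB1 hB2 hc1 hc2
    by_contra hne
    obtain ⟨hk1, hcl1⟩ := hblock W1 hB1 hc1
    obtain ⟨hk2, hcl2⟩ := hblock W2 hB2 hc2
    have hun : (W1 ∪ W2).card ≤ n := by
      have := Finset.card_le_card (Finset.subset_univ (W1 ∪ W2))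
      simpa using this
    have hint : 2 ≤ (W1 ∩ W2).card := by
      have := Finset.card_union_add_card_inter W1 W2
      omega
    obtain ⟨a, ha, b, hb, hab⟩ := Finset.one_lt_card.mp hint
    have ha1 : a ∈ W1 := (Finset.mem_inter.mp ha).1
    have ha2 : a ∈ W2 := (Finset.mem_inter.mp ha).2
    have hb1 : b ∈ W1 := (Finset.mem_inter.mp hb).1
    have hb2 : b ∈ W2 := (Finset.mem_inter.mp hb).2
    have hcand : BlockCand G (W1 ∪ W2) := by
      refine Or.inr (isTwoConn_of_hubs G (W1 ∪ W2) a b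
        (Finset.mem_union_left _ ha1) (Finset.mem_union_left _ hb1) hab ?_)
      intro c hc v hv
      rcases eq_or_ne v c with h | h
      · exact Or.inl h
      · have hc1 : c ∈ W1 := by rcases hc with rfl | rfl <;> assumption
        have hc2 : c ∈ W2 := by rcases hc with rfl | rfl <;> assumption
        rcases Finset.mem_union.mp hv with hv | hv
        · exact Or.inr (hcl1 (by exact_mod_cast hv) (by exact_mod_cast hc1) h)
        · exact Or.inr (hcl2 (by exact_mod_cast hv) (by exact_mod_cast hc2) h)
    by_cases heq : W1 ∪ W2 = W1
    · have hsub : W2 ⊆ W1 := by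
        rw [← heq]; exact Finset.subset_union_right
      exact hB2.2 W1 (Finset.ssubset_iff_subset_ne.mpr ⟨hsub, Ne.symm hne⟩) hB1.1
    · exact hB1.2 (W1 ∪ W2)
        (Finset.ssubset_iff_subset_ne.mpr ⟨Finset.subset_union_left, Ne.symm heq⟩) hcand
  -- a block containing each edge
  have hedge_block : ∀ e ∈ E, ∃ W, e ⊆ W ∧ IsBlock G W := by
    intro e he
    obtain ⟨u, v, huv, rfl⟩ := hpair e he
    have hcl : G.IsClique (({u, v} : Finset (Fin n)) : Set (Fin n)) := by
      intro x hx y hy hxy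
      simp only [Finset.coe_insert, Finset.coe_singleton, Set.mem_insert_iff,
        Set.mem_singleton_iff] at hx hy
      have hmem : ({x, y} : Finset (Fin n)) ∈ E := by
        rcases hx with rfl | rfl <;> rcases hy with rfl | rfl
        · exact absurd rfl hxy
        · exact he
        · rwa [Finset.pair_comm]
        · exact absurd rfl hxy
      exact ⟨hxy, hmem⟩
    have hcand : BlockCand G {u, v} :=
      Or.inr (isTwoConn_of_isClique G _ (le_of_eq (Finset.card_pair huv).symm) hcl)
    exact exists_block_superset G _ hcand
  -- fix one edge and its block
  obtain ⟨e0, he0⟩ := Finset.nonempty_iff_ne_empty.mpr hEne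
  obtain ⟨W0, he0W, hW0⟩ := hedge_block e0 he0
  have hcW0 : 2 ≤ W0.card := by
    have := Finset.card_le_card he0W
    have := hE.1 e0 he0
    omega
  obtain ⟨hkW0, hclW0⟩ := hblock W0 hW0 hcW0
  -- E consists exactly of the pairs inside W0
  have hEeq : E = Finset.powersetCard 2 W0 := by
    ext e
    rw [Finset.mem_powersetCard]
    constructor
    · intro he
      obtain ⟨W, heW, hW⟩ := hedge_block e he
      have hcW : 2 ≤ W.card := by
        have := Finset.card_le_card heW
        have := hE.1 e he
        omega
      have := huniq W W0 hW hW0 hcW hcW0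
      exact ⟨this ▸ heW, hE.1 e he⟩
    · rintro ⟨hsub, hc2⟩
      obtain ⟨u, v, huv, rfl⟩ := Finset.card_eq_two.mp hc2
      have hu : u ∈ W0 := hsub (Finset.mem_insert_self u {v})
      have hv : v ∈ W0 := hsub (Finset.mem_insert_of_mem (Finset.mem_singleton_self v))
      exact (hclW0 (by exact_mod_cast hu) (by exact_mod_cast hv) huv).2
  have hbi : E.biUnion id = W0 := by
    rw [hEeq]
    exact biUnion_powersetCard_two W0 hcW0
  rw [hbi]
  exact ⟨hEeq, Or.inr hkW0⟩

/-- For `k > 3` and `n < 2k-1`, the poset `Σ_{n,k}` is order-isomorphic to the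
lower-truncated Boolean algebra `{A ⊆ [n] : |A| ≥ k} ∪ {∅}` ordered by inclusion. -/
theorem sigma_iso_truncated_boolean (n k : ℕ) (hk : 3 < k) (hn1 : 1 ≤ n)
    (hn2 : n < 2 * k - 1) :
    Nonempty ({E : Finset (Finset (Fin n)) // InSigma n k E} ≃o
      {A : Finset (Fin n) // k ≤ A.card ∨ A = ∅}) := by
  have hk2 : 2 ≤ k := by omega
  -- forward map on underlying data
  have hf : ∀ A : {A : Finset (Fin n) // k ≤ A.card ∨ A = ∅},
      InSigma n k (A.1.powersetCard 2) := by
    rintro ⟨A, hA | rfl⟩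
    · exact inSigma_powersetCard n k hk2 A hA
    · rw [powersetCard_two_empty]
      exact inSigma_empty n k
  have hg : ∀ E : {E : Finset (Finset (Fin n)) // InSigma n k E},
      k ≤ (E.1.biUnion id).card ∨ E.1.biUnion id = ∅ := by
    rintro ⟨E, hE⟩
    rcases (sigma_structure n k hk hn2 E hE).2 with h | h
    · right; subst h; rfl
    · exact Or.inl h
  refine ⟨OrderIso.symm
    ⟨⟨fun A => ⟨A.1.powersetCard 2, hf A⟩, fun E => ⟨E.1.biUnion id, hg E⟩, ?_, ?_⟩, ?_⟩⟩
  · -- left inverse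
    rintro ⟨A, hA | rfl⟩
    · refine Subtype.ext ?_
      exact biUnion_powersetCard_two A (hk2.trans hA)
    · refine Subtype.ext ?_
      show (Finset.powersetCard 2 (∅ : Finset (Fin n))).biUnion id = ∅
      rw [powersetCard_two_empty]
      rfl
  · -- right inverse
    rintro ⟨E, hE⟩
    exact Subtype.ext (sigma_structure n k hk hn2 E hE).1.symm
  · -- order embedding
    rintro ⟨A, hA⟩ ⟨B, hB⟩
    simp only [Equiv.coe_fn_mk, Subtype.mk_le_mk]
    change A.powersetCard 2 ⊆ B.powersetCard 2 ↔ A ⊆ B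
    constructor
    · intro h
      rcases hA with hA | rfl
      · intro a ha
        obtain ⟨b, hb, hba⟩ := Finset.exists_mem_ne (hk2.trans hA) a
        have : ({a, b} : Finset (Fin n)) ∈ A.powersetCard 2 :=
          Finset.mem_powersetCard.mpr ⟨by
            intro x hx
            rcases Finset.mem_insert.mp hx with rfl | hx
            · exact ha
            · rw [Finset.mem_singleton.mp hx]; exact hb, Finset.card_pair hba.symm⟩
        exact (Finset.mem_powersetCard.mp (h this)).1 (Finset.mem_insert_self a {b})
      · exact Finset.empty_subset B
    · exact Finset.powersetCard_mono
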